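/- Let ζ be a primitive root of unity of order dividing q−1 in C_p with ζ ≠ 1, where q is a power of p, and let s ≥ 1. Then the difference Σ_{0<n<q^{N+1}, p∤n} ζ^n/n^s − Σ_{0<n<q^N, p∤n} ζ^n/n^s has p-adic absolute value at most |q^N| · C for a constant C; more precisely it equals Σ_{1≤t≤q−1} Σ_{0<n<q^N, p∤n} ζ^{n+tq^N}/(n+tq^N)^s, which is congruent modulo q^N (in the sense of p-adic valuation ≥ N·v_p(q) minus a bounded amount) to (Σ_{1≤t≤q−1} ζ^t)(Σ_{0<n<q^N, p∤n} ζ^n/n^s) = 0. Consequently the sequence F_N := Σ_{0<n<q^N, p∤n} ζ^n/n^s is p-adically Cauchy and lim_{N→∞} F_N exists in C_p. -/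

import Mathlib

open Filter Topology

/-- let `q = p^e` and `ζ ≠ 1` a root of unity with `ζ^{q−1} = 1` in a
complete nonarchimedean normed field with `‖p‖ = 1/p` (modeling `ℂ_p`), and `s ≥ 1`.
Then the partial sums `F_N = Σ_{0<n<q^N, p∤n} ζ^n/n^s` converge:
`lim_{N→∞} F_N` exists. -/
theorem stmt16 (p : ℕ) (hp : p.Prime) {K : Type*} [NormedField K] [CompleteSpace K]
    (hna : IsNonarchimedean (norm : K → ℝ)) (hpK : ‖(p : K)‖ = (p : ℝ)⁻¹)
    (q e : ℕ) (he : 1 ≤ e) (hq : q = p ^ e)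
    (ζ : K) (hζ : ζ ^ (q - 1) = 1) (hζ1 : ζ ≠ 1)
    (s : ℕ) (hs : 1 ≤ s) :
    ∃ L : K,
      Tendsto (fun N : ℕ =>
          ∑ n ∈ (Finset.Ico 1 (q ^ N)).filter (fun n => ¬ p ∣ n),
            ζ ^ n / (n : K) ^ s)
        atTop (𝓝 L) := by
  classical
  haveI := IsUltrametricDist.isUltrametricDist_of_isNonarchimedean_norm hna
  have hp2 : 2 ≤ p := hp.two_le
  have hq2 : 2 ≤ q := by
    rw [hq]
    calc 2 ≤ p := hp2
    _ = p ^ 1 := (pow_one p).symm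
    _ ≤ p ^ e := Nat.pow_le_pow_right (by omega) he
  -- norms of integers
  have hnorm_nat : ∀ m : ℕ, ‖(m : K)‖ ≤ 1 := fun m =>
    IsUltrametricDist.norm_natCast_le_one K m
  have hnorm_int : ∀ m : ℤ, ‖(m : K)‖ ≤ 1 := fun m =>
    IsUltrametricDist.norm_intCast_le_one K m
  have hp_inv_lt : (p : ℝ)⁻¹ < 1 := by
    rw [inv_lt_one_iff₀]
    right
    exact_mod_cast by omega
  -- norm of naturals coprime to p is 1
  have hunit : ∀ n : ℕ, ¬ p ∣ n → ‖(n : K)‖ = 1 := by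
    intro n hn
    refine le_antisymm (hnorm_nat n) ?_
    by_contra hlt
    push_neg at hlt
    have hg : Nat.gcd n p = 1 :=
      Nat.Coprime.gcd_eq_one ((hp.coprime_iff_not_dvd.mpr hn).symm)
    have hbez : ((1 : ℤ) : K) = (n : K) * ((Nat.gcdA n p : ℤ) : K)
        + (p : K) * ((Nat.gcdB n p : ℤ) : K) := by
      have := Nat.gcd_eq_gcd_ab n p
      rw [hg] at this
      have : ((1 : ℤ) : K) = ((n : ℤ) * Nat.gcdA n p + (p : ℤ) * Nat.gcdB n p : ℤ) := by
        exact_mod_cast congrArg (fun z : ℤ => ((z : ℤ) : K)) this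
      push_cast at this ⊢
      linear_combination this
    have h1 : (1 : ℝ) = ‖((1 : ℤ) : K)‖ := by norm_num
    have hle : ‖((1 : ℤ) : K)‖ ≤ max (‖(n : K)‖ * ‖((Nat.gcdA n p : ℤ) : K)‖)
        (‖(p : K)‖ * ‖((Nat.gcdB n p : ℤ) : K)‖) := by
      rw [hbez]
      refine le_trans (hna _ _) ?_
      simp [norm_mul]
    have hA := hnorm_int (Nat.gcdA n p)
    have hB := hnorm_int (Nat.gcdB n p)
    have hlt1 : ‖(n : K)‖ * ‖((Nat.gcdA n p : ℤ) : K)‖ < 1 := by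
      calc ‖(n : K)‖ * ‖((Nat.gcdA n p : ℤ) : K)‖ ≤ ‖(n : K)‖ * 1 :=
            mul_le_mul_of_nonneg_left hA (norm_nonneg _)
      _ = ‖(n : K)‖ := mul_one _
      _ < 1 := hlt
    have hlt2 : ‖(p : K)‖ * ‖((Nat.gcdB n p : ℤ) : K)‖ < 1 := by
      calc ‖(p : K)‖ * ‖((Nat.gcdB n p : ℤ) : K)‖ ≤ ‖(p : K)‖ * 1 :=
            mul_le_mul_of_nonneg_left hB (norm_nonneg _)
      _ = ‖(p : K)‖ := mul_one _
      _ < 1 := by rw [hpK]; exact hp_inv_lt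
    have : (1 : ℝ) < 1 := by
      calc (1 : ℝ) = ‖((1 : ℤ) : K)‖ := h1
      _ ≤ _ := hle
      _ < 1 := max_lt hlt1 hlt2
    exact absurd this (lt_irrefl 1)
  -- norm of ζ is 1
  have hζnorm : ‖ζ‖ = 1 := by
    have h1 : ‖ζ‖ ^ (q - 1) = 1 := by rw [← norm_pow, hζ, norm_one]
    have h2 : q - 1 ≠ 0 := by omega
    rcases (pow_eq_one_iff_cases.mp h1) with h | h | h
    · omega
    · exact h
    · rcases h with ⟨h, -⟩
      nlinarith [norm_nonneg ζ]
  -- ζ^q = ζ, hence ζ^(q^N) = ζ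
  have hζq : ζ ^ q = ζ := by
    conv_lhs => rw [show q = (q - 1) + 1 by omega]
    rw [pow_succ, hζ, one_mul]
  have hζqN : ∀ N : ℕ, ζ ^ (q ^ N) = ζ := by
    intro N
    induction N with
    | zero => simp
    | succ N ih => rw [pow_succ, pow_mul, ih, hζq]
  -- sum of ζ^t over 1 ≤ t < q vanishes
  have hsumζ : ∑ t ∈ Finset.Ico 1 q, ζ ^ t = 0 := by
    have hgeom : ∑ t ∈ Finset.range (q - 1), ζ ^ t = 0 := by
      rw [geom_sum_eq hζ1, hζ, sub_self, zero_div]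
    rw [Finset.sum_Ico_eq_sum_range]
    have : ∀ t ∈ Finset.range (q - 1), ζ ^ (1 + t) = ζ * ζ ^ t := fun t _ => by
      rw [pow_add, pow_one]
    rw [Finset.sum_congr rfl this, ← Finset.mul_sum, hgeom, mul_zero]
  -- the summand function and partial sums
  set g : ℕ → K := fun n => if ¬ p ∣ n then ζ ^ n / (n : K) ^ s else 0 with hg
  set F : ℕ → K := fun N =>
      ∑ n ∈ (Finset.Ico 1 (q ^ N)).filter (fun n => ¬ p ∣ n), ζ ^ n / (n : K) ^ s with hF
  have hg0 : g 0 = 0 := by simp [hg]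
  have hFrange : ∀ N : ℕ, F N = ∑ n ∈ Finset.range (q ^ N), g n := by
    intro N
    have hq1 : 1 ≤ q ^ N := Nat.one_le_pow _ _ (by omega)
    simp only [hF]
    rw [Finset.sum_filter, Finset.range_eq_Ico,
      Finset.sum_eq_sum_Ico_succ_bot hq1, hg0, zero_add]
  -- split a sum over range (k*d) into blocks
  have hsplit : ∀ (k d : ℕ) (f : ℕ → K),
      ∑ n ∈ Finset.range (k * d), f n
        = ∑ t ∈ Finset.range k, ∑ m ∈ Finset.range d, f (t * d + m) := by
    intro k d f
    induction k with
    | zero => simp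
    | succ k ih =>
      rw [Nat.succ_mul, Finset.sum_range_add, ih, Finset.sum_range_succ]
  set r : ℝ := ‖(q : K)‖ with hr
  have hrval : r = ((p : ℝ)⁻¹) ^ e := by
    rw [hr, hq]
    push_cast
    rw [norm_pow, hpK]
  have hr0 : 0 ≤ r := norm_nonneg _
  have hrlt : r < 1 := by
    rw [hrval]
    exact pow_lt_one₀ (by positivity) hp_inv_lt (by omega)
  have hdnorm : ∀ N : ℕ, ‖((q ^ N : ℕ) : K)‖ = r ^ N := by
    intro N
    push_cast
    rw [norm_pow]
  -- key bound on consecutive differences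
  have key : ∀ N : ℕ, 1 ≤ N → ‖F (N + 1) - F N‖ ≤ r ^ N := by
    intro N hN
    set d : ℕ := q ^ N with hd
    have hpd : p ∣ d := by
      rw [hd, hq]
      exact dvd_pow (dvd_pow_self p (by omega)) (by positivity)
    have hdq : q ^ (N + 1) = q * d := by rw [hd, pow_succ, mul_comm]
    have hFN1 : F (N + 1) = ∑ t ∈ Finset.range q, ∑ m ∈ Finset.range d, g (t * d + m) := by
      rw [hFrange, hdq, hsplit]
    have hbot : ∑ t ∈ Finset.range q, ∑ m ∈ Finset.range d, g (t * d + m)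
        = (∑ m ∈ Finset.range d, g m)
          + ∑ t ∈ Finset.Ico 1 q, ∑ m ∈ Finset.range d, g (t * d + m) := by
      rw [Finset.range_eq_Ico, Finset.sum_eq_sum_Ico_succ_bot (by omega : 0 < q)]
      simp
    have hFNd : F N = ∑ m ∈ Finset.range d, g m := hFrange N
    have hzero : ∑ t ∈ Finset.Ico 1 q, ζ ^ t * (∑ m ∈ Finset.range d, g m) = 0 := by
      rw [← Finset.sum_mul, hsumζ, zero_mul]
    have hdiff : F (N + 1) - F N
        = ∑ t ∈ Finset.Ico 1 q, ∑ m ∈ Finset.range d, (g (t * d + m) - ζ ^ t * g m) := by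
      rw [hFN1, hbot, hFNd]
      rw [show ∀ a b : K, a + b - a = b from fun a b => by ring]
      rw [← sub_zero (∑ t ∈ Finset.Ico 1 q, ∑ m ∈ Finset.range d, g (t * d + m)), ← hzero,
        ← Finset.sum_sub_distrib]
      refine Finset.sum_congr rfl fun t _ => ?_
      rw [Finset.mul_sum, ← Finset.sum_sub_distrib]
    rw [hdiff]
    refine IsUltrametricDist.norm_sum_le_of_forall_le_of_nonneg (by positivity) fun t ht => ?_
    refine IsUltrametricDist.norm_sum_le_of_forall_le_of_nonneg (by positivity) fun m hm => ?_
    by_cases hpm : p ∣ m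
    · have hpm' : p ∣ t * d + m := Dvd.dvd.add (Dvd.dvd.mul_left hpd t) hpm
      simp [hg, hpm, hpm']
      positivity
    · have hpm' : ¬ p ∣ t * d + m := fun h => hpm ((Nat.dvd_add_right
        (Dvd.dvd.mul_left hpd t)).mp h)
      have hA : ‖((t * d + m : ℕ) : K)‖ = 1 := hunit _ hpm'
      have hB : ‖((m : ℕ) : K)‖ = 1 := hunit _ hpm
      have hAne : ((t * d + m : ℕ) : K) ≠ 0 := by
        intro h; rw [h, norm_zero] at hA; norm_num at hA
      have hBne : ((m : ℕ) : K) ≠ 0 := by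
        intro h; rw [h, norm_zero] at hB; norm_num at hB
      have field_id : ∀ (u v a b : K), a ≠ 0 → b ≠ 0 →
          u * v / a - u * (v / b) = u * v * ((b - a) / (a * b)) := by
        intro u v a b ha hb
        field_simp
      have hζpow : ζ ^ (t * d + m) = ζ ^ t * ζ ^ m := by
        rw [pow_add, pow_mul', hd, hζqN]
      have hg1 : g (t * d + m) = ζ ^ t * ζ ^ m / ((t * d + m : ℕ) : K) ^ s := by
        simp only [hg]
        rw [if_pos hpm', hζpow]
      have hg2 : g m = ζ ^ m / ((m : ℕ) : K) ^ s := by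
        simp only [hg]
        rw [if_pos hpm]
      rw [hg1, hg2, field_id _ _ _ _ (pow_ne_zero s hAne) (pow_ne_zero s hBne)]
      set A : K := ((t * d + m : ℕ) : K) with hAdef
      set B : K := ((m : ℕ) : K) with hBdef
      have hnorm_eq : ‖ζ ^ t * ζ ^ m * ((B ^ s - A ^ s) / (A ^ s * B ^ s))‖
          = ‖B ^ s - A ^ s‖ := by
        rw [norm_mul, norm_mul, norm_div, norm_mul, norm_pow, norm_pow, norm_pow, norm_pow,
          hζnorm, hA, hB]
        simp
      rw [hnorm_eq]
      -- bound ‖B^s - A^s‖ via the geometric factorization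
      have hfac : B ^ s - A ^ s = (∑ i ∈ Finset.range s, B ^ i * A ^ (s - 1 - i)) * (B - A) :=
        (geom_sum₂_mul B A s).symm
      have hBA : ‖B - A‖ ≤ r ^ N := by
        have : B - A = -((t : K) * ((d : ℕ) : K)) := by
          rw [hAdef, hBdef]
          push_cast
          ring
        rw [this, norm_neg, norm_mul]
        calc ‖(t : K)‖ * ‖((d : ℕ) : K)‖ ≤ 1 * ‖((d : ℕ) : K)‖ :=
              mul_le_mul_of_nonneg_right (hnorm_nat t) (norm_nonneg _)
        _ = ‖((d : ℕ) : K)‖ := one_mul _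
        _ = r ^ N := by rw [hd, hdnorm]
      have hgsum : ‖∑ i ∈ Finset.range s, B ^ i * A ^ (s - 1 - i)‖ ≤ 1 := by
        refine IsUltrametricDist.norm_sum_le_of_forall_le_of_nonneg zero_le_one fun i _ => ?_
        rw [norm_mul, norm_pow, norm_pow, hA, hB, one_pow, one_pow, mul_one]
      calc ‖B ^ s - A ^ s‖ = ‖∑ i ∈ Finset.range s, B ^ i * A ^ (s - 1 - i)‖ * ‖B - A‖ := by
            rw [hfac, norm_mul]
      _ ≤ 1 * (r ^ N) := mul_le_mul hgsum hBA (norm_nonneg _) zero_le_one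
      _ = r ^ N := one_mul _
  -- conclude: Cauchy sequence via geometric bound
  set C : ℝ := max (dist (F 0) (F 1)) 1 with hC
  have hCauchy : CauchySeq F := by
    refine cauchySeq_of_le_geometric r C hrlt fun n => ?_
    rcases Nat.eq_zero_or_pos n with rfl | hn
    · simp only [pow_zero, mul_one, hC]
      exact le_max_left _ _
    · have h1 : dist (F n) (F (n + 1)) = ‖F (n + 1) - F n‖ := by
        rw [dist_eq_norm, norm_sub_rev]
      rw [h1]
      calc ‖F (n + 1) - F n‖ ≤ r ^ n := key n hn
      _ = 1 * r ^ n := (one_mul _).symm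
      _ ≤ C * r ^ n := by
          refine mul_le_mul_of_nonneg_right ?_ (by positivity)
          exact le_max_right _ _
  obtain ⟨L, hL⟩ := cauchySeq_tendsto_of_complete hCauchy
  exact ⟨L, hL⟩
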